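/- Let T_1 and T_2 be bounded linear operators on a complex Hilbert space H. Then ‖T_1 + T_2‖² ≤ ‖ (3/2)(T_1* T_1 + T_2* T_2) + Re(T_1* T_2) ‖. -/

import Mathlib

open ContinuousLinearMap

/-- The real part of an operator: `Re(T) = (T + T*)/2`. -/
noncomputable def reOp {H : Type*} [NormedAddCommGroup H] [InnerProductSpace ℂ H]
    [CompleteSpace H] (T : H →L[ℂ] H) : H →L[ℂ] H :=
  (2 : ℂ)⁻¹ • (T + adjoint T)

theorem norm_sq_add_le_norm_three_halves
    {H : Type*} [NormedAddCommGroup H] [InnerProductSpace ℂ H] [CompleteSpace H]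
    (T₁ T₂ : H →L[ℂ] H) :
    ‖T₁ + T₂‖ ^ 2 ≤
      ‖((3 : ℂ) / 2) • (adjoint T₁ ∘L T₁ + adjoint T₂ ∘L T₂) +
        reOp (adjoint T₁ ∘L T₂)‖ := by
  set S : H →L[ℂ] H := ((3 : ℂ) / 2) • (adjoint T₁ ∘L T₁ + adjoint T₂ ∘L T₂) +
        reOp (adjoint T₁ ∘L T₂) with hS
  have hop : S = adjoint (T₁ + T₂) ∘L (T₁ + T₂)
      + (2:ℂ)⁻¹ • (adjoint (T₁ - T₂) ∘L (T₁ - T₂)) := by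
    simp only [hS, reOp, adjoint_comp, adjoint_adjoint, map_add, map_sub,
      add_comp, sub_comp, comp_add, comp_sub, smul_add, smul_sub]
    module
  have key : ∀ x : H, ‖(T₁ + T₂) x‖ ^ 2 ≤ ‖S‖ * ‖x‖ ^ 2 := by
    intro x
    have h1 : Complex.re (inner ℂ (S x) x : ℂ)
        = ‖(T₁ + T₂) x‖ ^ 2 + (2:ℝ)⁻¹ * ‖(T₁ - T₂) x‖ ^ 2 := by
      rw [hop]
      simp only [ContinuousLinearMap.add_apply, ContinuousLinearMap.smul_apply,
        ContinuousLinearMap.comp_apply, inner_add_left, inner_smul_left]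
      rw [adjoint_inner_left, adjoint_inner_left]
      simp only [ContinuousLinearMap.add_apply, ContinuousLinearMap.sub_apply]
      rw [@inner_self_eq_norm_sq_to_K ℂ, @inner_self_eq_norm_sq_to_K ℂ]
      simp
      norm_cast
    have h2 : Complex.re (inner ℂ (S x) x : ℂ) ≤ ‖S‖ * ‖x‖ ^ 2 := by
      calc Complex.re (inner ℂ (S x) x : ℂ) ≤ ‖(inner ℂ (S x) x : ℂ)‖ :=
            (Complex.re_le_norm _)
        _ ≤ ‖S x‖ * ‖x‖ := norm_inner_le_norm _ _
        _ ≤ (‖S‖ * ‖x‖) * ‖x‖ := by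
            gcongr; exact S.le_opNorm x
        _ = ‖S‖ * ‖x‖ ^ 2 := by ring
    nlinarith [sq_nonneg ‖(T₁ - T₂) x‖]
  have hSn : (0:ℝ) ≤ ‖S‖ := norm_nonneg _
  have hb : ‖T₁ + T₂‖ ≤ Real.sqrt ‖S‖ := by
    refine opNorm_le_bound _ (Real.sqrt_nonneg _) fun x => ?_
    have := key x
    have h : ‖(T₁ + T₂) x‖ = Real.sqrt (‖(T₁ + T₂) x‖ ^ 2) := by
      rw [Real.sqrt_sq (norm_nonneg _)]
    rw [h]
    calc Real.sqrt (‖(T₁ + T₂) x‖ ^ 2) ≤ Real.sqrt (‖S‖ * ‖x‖ ^ 2) :=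
          Real.sqrt_le_sqrt this
      _ = Real.sqrt ‖S‖ * ‖x‖ := by
          rw [Real.sqrt_mul hSn, Real.sqrt_sq (norm_nonneg _)]
  calc ‖T₁ + T₂‖ ^ 2 ≤ Real.sqrt ‖S‖ ^ 2 := by
        gcongr
    _ = ‖S‖ := Real.sq_sqrt hSn
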